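/- Let agent i have a budget-additive SPLC utility with cap U_i > 0, segment rates u_{ijt} satisfying u_{ijt} ≤ U_i for all j, t, and lengths d_{ijt} > 0, let p ∈ ℝ_{>0}^m be prices, and let x_i = (x_{ijt}) with 0 ≤ x_{ijt} ≤ d_{ijt}, 0 < u_i(x_i) = Σ_j Σ_t u_{ijt} x_{ijt} ≤ U_i. Suppose there exist multipliers r_{ijt} ≥ 0 and γ_i ≥ 0 satisfying: (i) u_{ijt}/u_i(x_i) ≤ r_{ijt} + p_j + u_{ijt}·γ_i; (ii) equality in (i) whenever x_{ijt} > 0; (iii) x_{ijt} = d_{ijt} whenever r_{ijt} > 0; (iv) u_i(x_i) = U_i whenever γ_i > 0; and the scaling u_i(x_i)/(1 − γ_i·u_i(x_i)) = 1 (with γ_i·u_i(x_i) < 1). Call good j expensive if p_j > 1, and call the agent capped if u_i(x_i) = U_i. Then: if the agent is capped, x_{ijt} = 0 for every expensive good j and every t, and U_i ≤ 1; and if the agent is not capped, then u_i(x_i) = 1. -/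

import Mathlib

open Finset

/-- Proposition 5.2 for budget-additive SPLC utilities. If the bundle
`x` of an agent with cap `U > 0` (with all rates `u_{jt} ≤ U`) satisfies the KKT
conditions (i)–(iv) of the Gale demand system with budget 1, with multipliers `r ≥ 0`
and `γ ≥ 0`, and the utility is scaled so that the bang-per-buck `u(x)/(1 − γ·u(x))`
equals 1, then: if the agent is capped (`u(x) = U`) they buy nothing of any expensive
good (`p_j > 1`) and `U ≤ 1`; and if the agent is not capped then `u(x) = 1`. -/
theorem splc_capped_uncapped_properties
    (m : ℕ) (k : Fin m → ℕ) (d uu : ∀ j : Fin m, Fin (k j) → ℝ)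
    (hd : ∀ j t, 0 < d j t) (huu : ∀ j t, 0 ≤ uu j t)
    (U : ℝ) (hU : 0 < U) (huuU : ∀ j t, uu j t ≤ U)
    (p : Fin m → ℝ) (hp : ∀ j, 0 < p j)
    (x : ∀ j : Fin m, Fin (k j) → ℝ)
    (hx : ∀ j t, 0 ≤ x j t ∧ x j t ≤ d j t)
    (ux : ℝ) (hux_def : ux = ∑ j, ∑ t, uu j t * x j t)
    (hux_pos : 0 < ux) (hux_cap : ux ≤ U)
    (r : ∀ j : Fin m, Fin (k j) → ℝ) (hr : ∀ j t, 0 ≤ r j t)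
    (γ : ℝ) (hγ : 0 ≤ γ)
    (kkt1 : ∀ j t, uu j t / ux ≤ r j t + p j + uu j t * γ)
    (kkt2 : ∀ j t, 0 < x j t → uu j t / ux = r j t + p j + uu j t * γ)
    (kkt3 : ∀ j t, 0 < r j t → x j t = d j t)
    (kkt4 : 0 < γ → ux = U)
    (hscale' : γ * ux < 1)
    (hscale : ux / (1 - γ * ux) = 1) :
    (ux = U → (∀ j, 1 < p j → ∀ t, x j t = 0) ∧ U ≤ 1) ∧
    (ux ≠ U → ux = 1) := by
  have hne : 1 - γ * ux ≠ 0 := by nlinarith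
  have hkey : ux * (1 + γ) = 1 := by
    rw [div_eq_one_iff_eq hne] at hscale; nlinarith
  constructor
  · intro hcap
    constructor
    · intro j hpj t
      by_contra hxt
      have hxpos : 0 < x j t := lt_of_le_of_ne (hx j t).1 (Ne.symm hxt)
      have heq := kkt2 j t hxpos
      have h1 : uu j t / ux ≤ 1 := by
        rw [div_le_one hux_pos]; rw [hcap]; exact huuU j t
      have h2 : 1 < r j t + p j + uu j t * γ := by
        have := hr j t
        have := huu j t
        nlinarith
      linarith [heq ▸ h1]
    · nlinarith
  · intro hne'
    have hγ0 : γ = 0 := by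
      by_contra h
      exact hne' (kkt4 (lt_of_le_of_ne hγ (Ne.symm h)))
    nlinarith
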